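/- (Kaluzhnin's theorem, length n case) Let A be an abelian group with a series of subgroups 0 = A₀ ≤ A₁ ≤ … ≤ Aₙ = A, and let G act on A by automorphisms stabilizing each Aᵢ and acting trivially on each factor Aᵢ₊₁/Aᵢ. Then the image of G in Aut(A) is nilpotent of class at most n − 1. -/

import Mathlib

/-- **Kaluzhnin's theorem.**  If a group `G` acts on an abelian group `A` stabilizing a
series `0 = A₀ ≤ A₁ ≤ … ≤ Aₙ = A` and acting trivially on each factor, then the image
of `G` in `Aut(A)`, i.e. `G/C_G(A)`, is nilpotent of class at most `n - 1`. -/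
theorem kaluzhnin {G : Type*} [Group G] {A : Type*} [AddCommGroup A]
    [DistribMulAction G A] (n : ℕ) (c : ℕ → AddSubgroup A)
    (hbot : c 0 = ⊥) (htop : c n = ⊤)
    (hmono : ∀ i < n, c i ≤ c (i + 1))
    (hstab : ∀ g : G, ∀ i < n, ∀ a ∈ c (i + 1), g • a - a ∈ c i) :
    (⊤ : Subgroup (G ⧸ (DistribMulAction.toAddAut G A).ker)).lowerCentralSeries (n - 1) = ⊥ := by
  classical
  set N := (DistribMulAction.toAddAut G A).ker with hN
  -- degenerate case n = 0 : A is trivial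
  rcases Nat.eq_zero_or_pos n with hn0 | hn
  · subst hn0
    have hA : ∀ a : A, a = 0 := by
      intro a
      have : a ∈ c 0 := htop ▸ AddSubgroup.mem_top a
      simpa [hbot] using this
    have hker : N = ⊤ := by
      rw [eq_top_iff]
      intro g _
      rw [hN, MonoidHom.mem_ker]
      ext a
      simp [hA a, hA (g • a)]
    have : Subsingleton (G ⧸ N) := by
      rw [hker]
      exact QuotientGroup.subsingleton_quotient_top
    exact Subsingleton.elim _ _
  -- basic fact: each `c j` (for `j ≤ n`) is invariant under the action
  have hinv : ∀ (g : G), ∀ j ≤ n, ∀ a ∈ c j, g • a ∈ c j := by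
    intro g j hj a ha
    cases j with
    | zero => simp [hbot] at ha; simp [ha, hbot]
    | succ i =>
      have h1 : g • a - a ∈ c i := hstab g i (Nat.lt_of_succ_le hj) a ha
      have h2 : g • a - a ∈ c (i + 1) := hmono i (Nat.lt_of_succ_le hj) h1
      simpa using add_mem h2 ha
  -- the subgroup of elements shifting the filtration down by `k+1`
  let T : ℕ → Subgroup G := fun k =>
    { carrier := { g : G | ∀ j ≤ n, ∀ a ∈ c j, g • a - a ∈ c (j - (k + 1)) }
      one_mem' := by intro j hj a ha; simpa using zero_mem _
      mul_mem' := by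
        intro g₁ g₂ h₁ h₂ j hj a ha
        have hb : g₂ • a ∈ c j := hinv g₂ j hj a ha
        have e : (g₁ * g₂) • a - a = (g₁ • (g₂ • a) - g₂ • a) + (g₂ • a - a) := by
          rw [mul_smul]; abel
        rw [e]
        exact add_mem (h₁ j hj _ hb) (h₂ j hj a ha)
      inv_mem' := by
        intro g h j hj a ha
        have hb : g⁻¹ • a ∈ c j := hinv g⁻¹ j hj a ha
        have e : g⁻¹ • a - a = -(g • (g⁻¹ • a) - g⁻¹ • a) := by
          rw [smul_inv_smul]; abel
        rw [e]
        exact neg_mem (h j hj _ hb) }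
  -- the key induction : lower central series of G lands in T
  have key : ∀ k, (⊤ : Subgroup G).lowerCentralSeries k ≤ T k := by
    intro k
    induction k with
    | zero =>
      intro g _ j hj a ha
      cases j with
      | zero => simp [hbot] at ha; simp [ha, hbot]
      | succ i => simpa using hstab g i (Nat.lt_of_succ_le hj) a ha
    | succ k ih =>
      rw [lowerCentralSeries_succ]
      rw [Subgroup.commutator_def, Subgroup.closure_le]
      rintro x ⟨g, hg, h, -, rfl⟩
      have hgT : g ∈ T k := ih hg
      have hhT : h ∈ T 0 := by
        intro j hj a ha
        cases j with
        | zero => simp [hbot] at ha; simp [ha, hbot]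
        | succ i => simpa using hstab h i (Nat.lt_of_succ_le hj) a ha
      intro j hj a ha
      -- set v so that ⁅g,h⁆ • a - a = (g*h) • v - (h*g) • v
      set v : A := (h * g)⁻¹ • a with hv
      have hvmem : v ∈ c j := hinv _ j hj a ha
      have ha' : a = (h * g) • v := by rw [hv, smul_inv_smul]
      have hmul : (g * h * g⁻¹ * h⁻¹) * (h * g) = g * h := by group
      have hcomm : (g * h * g⁻¹ * h⁻¹) • a - a = (g * h) • v - (h * g) • v := by
        conv_lhs => rw [ha', ← mul_smul, hmul]
      -- the two difference operators
      have hφψ : (g * h) • v - (h * g) • v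
          = (g • (h • v - v) - (h • v - v)) - (h • (g • v - v) - (g • v - v)) := by
        simp only [mul_smul, smul_sub]
        abel
      have h1 : h • v - v ∈ c (j - 1) := by simpa using hhT j hj v hvmem
      have h2 : g • (h • v - v) - (h • v - v) ∈ c (j - 1 - (k + 1)) :=
        hgT (j - 1) (le_trans (Nat.sub_le j 1) hj) _ h1
      have h3 : g • v - v ∈ c (j - (k + 1)) := hgT j hj v hvmem
      have h4 : h • (g • v - v) - (g • v - v) ∈ c (j - (k + 1) - 1) :=
        hhT (j - (k + 1)) (le_trans (Nat.sub_le j (k + 1)) hj) _ h3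
      have e1 : j - 1 - (k + 1) = j - (k + 1 + 1) := by omega
      have e2 : j - (k + 1) - 1 = j - (k + 1 + 1) := by omega
      rw [commutatorElement_def, hcomm, hφψ]
      exact sub_mem (e1 ▸ h2) (e2 ▸ h4)
  -- elements of T (n-1) act trivially
  have hTker : T (n - 1) ≤ N := by
    intro g hg
    rw [hN, MonoidHom.mem_ker]
    ext a
    have ha : a ∈ c n := htop ▸ AddSubgroup.mem_top a
    have := hg n le_rfl a ha
    have hsub : n - (n - 1 + 1) = 0 := by omega
    rw [hsub, hbot] at this
    have : g • a = a := by
      have := (AddSubgroup.mem_bot).mp this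
      linear_combination (norm := abel) this
    exact this
  -- lower central series of the quotient is contained in the image
  have hquot : ∀ k, (⊤ : Subgroup (G ⧸ N)).lowerCentralSeries k ≤
      Subgroup.map (QuotientGroup.mk' N) ((⊤ : Subgroup G).lowerCentralSeries k) := by
    intro k
    induction k with
    | zero =>
      simp [Subgroup.map_top_of_surjective _ (QuotientGroup.mk'_surjective N)]
    | succ k ih =>
      rw [lowerCentralSeries_succ, Subgroup.commutator_def, Subgroup.closure_le]
      rintro x ⟨p, hp, q, -, rfl⟩
      obtain ⟨p', hp', rfl⟩ := ih hp
      obtain ⟨q', rfl⟩ := QuotientGroup.mk'_surjective N q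
      refine ⟨p' * q' * p'⁻¹ * q'⁻¹, ?_, by simp [commutatorElement_def]⟩
      rw [lowerCentralSeries_succ]
      exact Subgroup.subset_closure ⟨p', hp', q', Subgroup.mem_top q', rfl⟩
  rw [eq_bot_iff]
  refine le_trans (hquot (n - 1)) (le_of_eq ?_)
  rw [Subgroup.map_eq_bot_iff, QuotientGroup.ker_mk']
  exact le_trans (key (n - 1)) hTker
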